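/- Let χ be a primitive, nontrivial Dirichlet character modulo N. Then g(χ) ≠ 0, and for every x ∈ ℂ with 0 < |x| < 2π/N one has e^{Nx} ≠ 1 and e^{x − 2πia/N} ≠ 1 for all 1 ≤ a ≤ N, and the identities N·g(χ)^{−1}·∑_{a=1}^{N} χ(a)·e^{ax}/(e^{Nx} − 1) = ∑_{a=1}^{N} χ̄(a)·e^{x − 2πia/N}/(e^{x − 2πia/N} − 1) = ∑_{a=1}^{N} χ̄(a)/(e^{x − 2πia/N} − 1) hold. -/

import Mathlib

open Complex Finset


lemma sum_Icc_zmod {N : ℕ} [NeZero N] (f : ZMod N → ℂ) :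
    ∑ a ∈ Icc 1 N, f (a : ZMod N) = ∑ x : ZMod N, f x := by
  have hN : 0 < N := Nat.pos_of_ne_zero (NeZero.ne N)
  refine Finset.sum_nbij' (fun a ↦ (a : ZMod N))
    (fun x ↦ if x = 0 then N else x.val) ?_ ?_ ?_ ?_ ?_
  · intro a _; exact Finset.mem_univ _
  · intro x _
    split_ifs with h
    · simp only [Finset.mem_Icc, h]; omega
    · have h1 : x.val ≠ 0 := fun hv ↦ h (by rwa [← ZMod.val_eq_zero])
      have h2 : x.val < N := x.val_lt
      simp only [Finset.mem_Icc]; omega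
  · intro a ha
    simp only [Finset.mem_Icc] at ha
    by_cases h : (a : ZMod N) = 0
    · have hdvd : N ∣ a := (ZMod.natCast_eq_zero_iff _ _).mp h
      have ha' : a = N := le_antisymm ha.2 (Nat.le_of_dvd (by omega) hdvd)
      rw [if_pos h, ha']
    · have hlt : a < N := by
        rcases Nat.lt_or_ge a N with h' | h'
        · exact h'
        · exact absurd (by simp [le_antisymm ha.2 h'] : (a : ZMod N) = 0) h
      rw [if_neg h, ZMod.val_cast_of_lt hlt]
  · intro x _
    split_ifs with h
    · simp [h]
    · exact ZMod.natCast_rightInverse x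
  · intro a _; rfl

open DirichletCharacter in
lemma gauss_ne {N : ℕ} [NeZero N] (χ : DirichletCharacter ℂ N) (hχ : χ.IsPrimitive) :
    gaussSum χ ZMod.stdAddChar ≠ 0 := by
  intro h
  have h1 : ∀ k : ZMod N, ZMod.dft (⇑χ) k = 0 := fun k ↦ by
    rw [hχ.fourierTransform_eq_inv_mul_gaussSum, h, mul_zero]
  have h2 : ZMod.dft (⇑χ) = ZMod.dft (0 : ZMod N → ℂ) := by
    rw [map_zero]; funext k; exact h1 k
  have h3 : (⇑χ) = (0 : ZMod N → ℂ) := ZMod.dft.injective h2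
  have h4 : χ 1 = 0 := congrFun h3 1
  rw [map_one] at h4
  exact one_ne_zero h4

lemma zeta_eq {N : ℕ} [NeZero N] (a : ℕ) :
    Complex.exp (2 * Real.pi * I * (a : ℂ) / (N : ℂ)) = ZMod.stdAddChar (a : ZMod N) := by
  have := ZMod.stdAddChar_coe (N := N) (a : ℤ)
  push_cast at this
  rw [this]

lemma zeta_pow {N : ℕ} [NeZero N] (k a : ℕ) :
    (ZMod.stdAddChar ((k : ZMod N)))^a = ZMod.stdAddChar ((a : ZMod N) * (k : ZMod N)) := by
  rw [← AddChar.map_nsmul_eq_pow]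
  congr 1
  rw [nsmul_eq_mul]

open DirichletCharacter in
lemma four' {N : ℕ} [NeZero N] (χ : DirichletCharacter ℂ N) (hχ : χ.IsPrimitive) (k : ℕ) :
    gaussSum χ ZMod.stdAddChar * (starRingEnd ℂ) (χ (k : ZMod N)) =
      ∑ a ∈ Icc 1 N, χ (a : ZMod N) * (ZMod.stdAddChar ((k : ZMod N)))^a := by
  have h1 : ∀ a : ℕ, χ (a : ZMod N) * (ZMod.stdAddChar ((k : ZMod N)))^a
      = (fun x : ZMod N => χ x * ZMod.stdAddChar (x * (k : ZMod N))) (a : ZMod N) := by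
    intro a; rw [zeta_pow]
  calc gaussSum χ ZMod.stdAddChar * (starRingEnd ℂ) (χ (k : ZMod N))
      = χ⁻¹ (k : ZMod N) * gaussSum χ ZMod.stdAddChar := by
        rw [← MulChar.star_apply' χ, mul_comm]; rfl
    _ = gaussSum χ (ZMod.stdAddChar.mulShift (k : ZMod N)) :=
        (gaussSum_mulShift_of_isPrimitive _ hχ _).symm
    _ = ∑ x : ZMod N, χ x * ZMod.stdAddChar (x * (k : ZMod N)) := by
        rw [gaussSum]
        exact Finset.sum_congr rfl fun x _ => by rw [AddChar.mulShift_apply, mul_comm x, mul_comm]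
    _ = ∑ a ∈ Icc 1 N, χ (a : ZMod N) * (ZMod.stdAddChar ((k : ZMod N)))^a := by
        rw [← sum_Icc_zmod (fun x : ZMod N => χ x * ZMod.stdAddChar (x * (k : ZMod N)))]
        exact Finset.sum_congr rfl fun a _ => (h1 a).symm

lemma orth {N : ℕ} [NeZero N] (b : ℕ) :
    ∑ k ∈ Icc 1 N, (ZMod.stdAddChar ((k : ZMod N)))^b
      = if (b : ZMod N) = 0 then (N : ℂ) else 0 := by
  have h1 : ∀ k : ℕ, (ZMod.stdAddChar ((k : ZMod N)))^b
      = (fun x : ZMod N => ZMod.stdAddChar (x * (b : ZMod N))) (k : ZMod N) := by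
    intro k
    rw [zeta_pow, mul_comm]
  calc ∑ k ∈ Icc 1 N, (ZMod.stdAddChar ((k : ZMod N)))^b
      = ∑ x : ZMod N, ZMod.stdAddChar (x * (b : ZMod N)) := by
        rw [← sum_Icc_zmod (fun x : ZMod N => ZMod.stdAddChar (x * (b : ZMod N)))]
        exact Finset.sum_congr rfl fun k _ => h1 k
    _ = if (b : ZMod N) = 0 then (N : ℂ) else 0 := by
        rw [AddChar.sum_mulShift _ (ZMod.isPrimitive_stdAddChar N), ZMod.card]
        split_ifs <;> simp

open DirichletCharacter in
lemma main_aux {N : ℕ} [NeZero N] (χ : DirichletCharacter ℂ N) (hχ : χ.IsPrimitive)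
    (x : ℂ) (hD : Complex.exp ((N : ℂ) * x) ≠ 1)
    (hw : ∀ a ∈ Icc 1 N, Complex.exp (x - 2 * Real.pi * I * (a : ℂ) / (N : ℂ)) ≠ 1) :
    gaussSum χ ZMod.stdAddChar *
      ∑ a ∈ Icc 1 N, (starRingEnd ℂ) (χ (a : ZMod N)) *
        Complex.exp (x - 2 * Real.pi * I * (a : ℂ) / (N : ℂ)) /
          (Complex.exp (x - 2 * Real.pi * I * (a : ℂ) / (N : ℂ)) - 1) =
    (N : ℂ) * ∑ a ∈ Icc 1 N, χ (a : ZMod N) * Complex.exp ((a : ℂ) * x) /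
        (Complex.exp ((N : ℂ) * x) - 1) := by
  have hN : 0 < N := Nat.pos_of_ne_zero (NeZero.ne N)
  set t : ℂ := Complex.exp x with ht
  set ζ : ℕ → ℂ := fun a => Complex.exp (2 * Real.pi * I * (a : ℂ) / (N : ℂ)) with hζdef
  set S : ℕ → ℂ := fun k => ∑ i ∈ range N, t ^ i * (ζ k) ^ (N - 1 - i) with hSdef
  have hζstd : ∀ k : ℕ, ζ k = ZMod.stdAddChar ((k : ZMod N)) := by
    intro k; rw [hζdef]; exact zeta_eq k
  have hDne : Complex.exp ((N : ℂ) * x) - 1 ≠ 0 := sub_ne_zero.mpr hD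
  have hζ0 : ∀ k : ℕ, ζ k ≠ 0 := by intro k; rw [hζdef]; exact Complex.exp_ne_zero _
  have hwζ : ∀ a : ℕ, Complex.exp (x - 2 * Real.pi * I * (a : ℂ) / (N : ℂ)) = t / ζ a := by
    intro a; rw [hζdef, ht]; exact Complex.exp_sub _ _
  have htN : t ^ N = Complex.exp ((N : ℂ) * x) := by
    rw [ht]; exact (Complex.exp_nat_mul x N).symm
  have hζN : ∀ k : ℕ, (ζ k) ^ N = 1 := by
    intro k
    rw [hζdef]
    dsimp only
    rw [← Complex.exp_nat_mul]
    have h1 : (N : ℂ) * (2 * Real.pi * I * (k : ℂ) / (N : ℂ)) = (k : ℂ) * (2 * Real.pi * I) := by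
      have hN0 : (N : ℂ) ≠ 0 := Nat.cast_ne_zero.mpr hN.ne'
      field_simp
    rw [h1]
    simpa using Complex.exp_int_mul_two_pi_mul_I (k : ℤ)
  have hgeom : ∀ k : ℕ, (t - ζ k) * S k = Complex.exp ((N : ℂ) * x) - 1 := by
    intro k
    have h := geom_sum₂_mul t (ζ k) N
    rw [hζN k, htN] at h
    rw [mul_comm]
    exact h
  have hfrac : ∀ a ∈ Icc 1 N, Complex.exp (x - 2 * Real.pi * I * (a : ℂ) / (N : ℂ)) /
      (Complex.exp (x - 2 * Real.pi * I * (a : ℂ) / (N : ℂ)) - 1)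
      = t * S a / (Complex.exp ((N : ℂ) * x) - 1) := by
    intro a ha
    have h1 : Complex.exp (x - 2 * Real.pi * I * (a : ℂ) / (N : ℂ)) - 1 ≠ 0 :=
      sub_ne_zero.mpr (hw a ha)
    rw [div_eq_div_iff h1 hDne, hwζ, ← hgeom a]
    field_simp [hζ0 a]
  have horth : ∀ a ∈ Icc 1 N,
      ∑ k ∈ Icc 1 N, (ZMod.stdAddChar ((k : ZMod N))) ^ a * S k = (N : ℂ) * t ^ (a - 1) := by
    intro a ha
    obtain ⟨ha1, ha2⟩ := Finset.mem_Icc.mp ha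
    calc ∑ k ∈ Icc 1 N, (ZMod.stdAddChar ((k : ZMod N))) ^ a * S k
        = ∑ k ∈ Icc 1 N, ∑ i ∈ range N,
            t ^ i * (ZMod.stdAddChar ((k : ZMod N))) ^ (a + (N - 1 - i)) := by
          refine Finset.sum_congr rfl fun k _ => ?_
          rw [hSdef]
          dsimp only
          rw [Finset.mul_sum]
          refine Finset.sum_congr rfl fun i _ => ?_
          rw [pow_add, hζstd k]
          ring
      _ = ∑ i ∈ range N, ∑ k ∈ Icc 1 N,
            t ^ i * (ZMod.stdAddChar ((k : ZMod N))) ^ (a + (N - 1 - i)) := Finset.sum_comm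
      _ = ∑ i ∈ range N, t ^ i *
            (if (((a + (N - 1 - i)) : ℕ) : ZMod N) = 0 then (N : ℂ) else 0) := by
          refine Finset.sum_congr rfl fun i _ => ?_
          rw [← Finset.mul_sum, orth]
      _ = ∑ i ∈ range N, (if i = a - 1 then t ^ i * (N : ℂ) else 0) := by
          refine Finset.sum_congr rfl fun i hi => ?_
          have hi' := Finset.mem_range.mp hi
          have hiff : (((a + (N - 1 - i)) : ℕ) : ZMod N) = 0 ↔ i = a - 1 := by
            rw [ZMod.natCast_eq_zero_iff]
            constructor
            · intro hdvd
              have h1 := Nat.le_of_dvd (by omega) hdvd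
              have h2 : N ∣ (a + (N - 1 - i) - N) := Nat.dvd_sub hdvd dvd_rfl
              have h3 : a + (N - 1 - i) - N = 0 := Nat.eq_zero_of_dvd_of_lt h2 (by omega)
              omega
            · intro h
              have h' : a + (N - 1 - i) = N := by omega
              rw [h']
          by_cases h : i = a - 1
          · rw [if_pos (hiff.mpr h), if_pos h]
          · rw [if_neg (fun hc => h (hiff.mp hc)), if_neg h, mul_zero]
      _ = t ^ (a - 1) * (N : ℂ) := by
          rw [Finset.sum_ite_eq' (range N) (a - 1) (fun i => t ^ i * (N : ℂ))]
          rw [if_pos (Finset.mem_range.mpr (by omega))]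
      _ = (N : ℂ) * t ^ (a - 1) := mul_comm _ _
  calc gaussSum χ ZMod.stdAddChar *
      ∑ a ∈ Icc 1 N, (starRingEnd ℂ) (χ (a : ZMod N)) *
        Complex.exp (x - 2 * Real.pi * I * (a : ℂ) / (N : ℂ)) /
          (Complex.exp (x - 2 * Real.pi * I * (a : ℂ) / (N : ℂ)) - 1)
      = ∑ k ∈ Icc 1 N, (gaussSum χ ZMod.stdAddChar * (starRingEnd ℂ) (χ (k : ZMod N))) *
          (t * S k / (Complex.exp ((N : ℂ) * x) - 1)) := by
        rw [Finset.mul_sum]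
        refine Finset.sum_congr rfl fun k hk => ?_
        rw [mul_div_assoc, hfrac k hk]
        ring
    _ = ∑ k ∈ Icc 1 N, (∑ a ∈ Icc 1 N, χ (a : ZMod N) * (ZMod.stdAddChar ((k : ZMod N))) ^ a) *
          (t * S k / (Complex.exp ((N : ℂ) * x) - 1)) := by
        refine Finset.sum_congr rfl fun k _ => ?_
        rw [four' χ hχ k]
    _ = ∑ k ∈ Icc 1 N, ∑ a ∈ Icc 1 N, χ (a : ZMod N) * (ZMod.stdAddChar ((k : ZMod N))) ^ a *
          (t * S k / (Complex.exp ((N : ℂ) * x) - 1)) := by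
        refine Finset.sum_congr rfl fun k _ => Finset.sum_mul _ _ _
    _ = ∑ a ∈ Icc 1 N, ∑ k ∈ Icc 1 N, χ (a : ZMod N) * (ZMod.stdAddChar ((k : ZMod N))) ^ a *
          (t * S k / (Complex.exp ((N : ℂ) * x) - 1)) := Finset.sum_comm
    _ = ∑ a ∈ Icc 1 N, (χ (a : ZMod N) * t / (Complex.exp ((N : ℂ) * x) - 1)) *
          ∑ k ∈ Icc 1 N, (ZMod.stdAddChar ((k : ZMod N))) ^ a * S k := by
        refine Finset.sum_congr rfl fun a _ => ?_
        rw [Finset.mul_sum]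
        refine Finset.sum_congr rfl fun k _ => by ring
    _ = ∑ a ∈ Icc 1 N, (χ (a : ZMod N) * t / (Complex.exp ((N : ℂ) * x) - 1)) *
          ((N : ℂ) * t ^ (a - 1)) := by
        refine Finset.sum_congr rfl fun a ha => ?_
        rw [horth a ha]
    _ = (N : ℂ) * ∑ a ∈ Icc 1 N, χ (a : ZMod N) * Complex.exp ((a : ℂ) * x) /
          (Complex.exp ((N : ℂ) * x) - 1) := by
        rw [Finset.mul_sum]
        refine Finset.sum_congr rfl fun a ha => ?_
        have ha1 : 1 ≤ a := (Finset.mem_Icc.mp ha).1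
        have hexp : Complex.exp ((a : ℂ) * x) = t ^ a := by
          rw [ht]; exact Complex.exp_nat_mul x a
        have hpow : t * t ^ (a - 1) = t ^ a := by
          rw [← pow_succ']
          congr 1
          omega
        rw [hexp, ← hpow]
        ring

lemma snd_aux {N : ℕ} [NeZero N] (χ : DirichletCharacter ℂ N) (hχ1 : χ ≠ 1) (x : ℂ)
    (hw : ∀ a ∈ Icc 1 N, Complex.exp (x - 2 * Real.pi * I * (a : ℂ) / (N : ℂ)) ≠ 1) :
    (∑ a ∈ Icc 1 N, (starRingEnd ℂ) (χ (a : ZMod N)) *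
        Complex.exp (x - 2 * Real.pi * I * (a : ℂ) / (N : ℂ)) /
          (Complex.exp (x - 2 * Real.pi * I * (a : ℂ) / (N : ℂ)) - 1))
      = ∑ a ∈ Icc 1 N, (starRingEnd ℂ) (χ (a : ZMod N)) /
          (Complex.exp (x - 2 * Real.pi * I * (a : ℂ) / (N : ℂ)) - 1) := by
  have hsum0 : ∑ a ∈ Icc 1 N, (starRingEnd ℂ) (χ (a : ZMod N)) = 0 := by
    have h1 : ∀ a : ℕ, (starRingEnd ℂ) (χ (a : ZMod N))
        = (χ⁻¹ : DirichletCharacter ℂ N) ((a : ZMod N)) := by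
      intro a; rw [starRingEnd_apply, MulChar.star_apply']
    rw [Finset.sum_congr rfl fun a _ => h1 a,
      sum_Icc_zmod (fun y : ZMod N => (χ⁻¹ : DirichletCharacter ℂ N) y)]
    exact MulChar.sum_eq_zero_of_ne_one (fun h => hχ1 (inv_eq_one.mp h))
  rw [← sub_eq_zero, ← Finset.sum_sub_distrib, ← hsum0]
  refine Finset.sum_congr rfl fun a ha => ?_
  have h1 : Complex.exp (x - 2 * Real.pi * I * (a : ℂ) / (N : ℂ)) - 1 ≠ 0 :=
    sub_ne_zero.mpr (hw a ha)
  field_simp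

/-- For a primitive nontrivial Dirichlet character `χ` mod `N`: the Gauss sum
`g(χ) = ∑_{a=1}^N χ(a)·e^{2πia/N}` is nonzero, and for every `x ∈ ℂ` with
`0 < |x| < 2π/N` one has `e^{Nx} ≠ 1`, `e^{x−2πia/N} ≠ 1` for `1 ≤ a ≤ N`, and
`N·g(χ)⁻¹·∑_{a=1}^N χ(a)·e^{ax}/(e^{Nx}−1)
  = ∑_{a=1}^N χ̄(a)·e^{x−2πia/N}/(e^{x−2πia/N}−1)
  = ∑_{a=1}^N χ̄(a)/(e^{x−2πia/N}−1)`. -/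
theorem gauss_sum_partial_fraction (N : ℕ) (hN : 0 < N) (χ : DirichletCharacter ℂ N)
    (hχ : χ.IsPrimitive) (hχ1 : χ ≠ 1) :
    (∑ a ∈ Icc 1 N, χ (a : ZMod N) *
        Complex.exp (2 * Real.pi * I * (a : ℂ) / (N : ℂ)) ≠ 0) ∧
    ∀ x : ℂ, 0 < ‖x‖ → ‖x‖ < 2 * Real.pi / (N : ℝ) →
      Complex.exp ((N : ℂ) * x) ≠ 1 ∧
      (∀ a ∈ Icc 1 N,
        Complex.exp (x - 2 * Real.pi * I * (a : ℂ) / (N : ℂ)) ≠ 1) ∧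
      (N : ℂ) * (∑ a ∈ Icc 1 N, χ (a : ZMod N) *
            Complex.exp (2 * Real.pi * I * (a : ℂ) / (N : ℂ)))⁻¹ *
          ∑ a ∈ Icc 1 N, χ (a : ZMod N) * Complex.exp ((a : ℂ) * x) /
            (Complex.exp ((N : ℂ) * x) - 1) =
        ∑ a ∈ Icc 1 N, (starRingEnd ℂ) (χ (a : ZMod N)) *
          Complex.exp (x - 2 * Real.pi * I * (a : ℂ) / (N : ℂ)) /
            (Complex.exp (x - 2 * Real.pi * I * (a : ℂ) / (N : ℂ)) - 1) ∧
      (∑ a ∈ Icc 1 N, (starRingEnd ℂ) (χ (a : ZMod N)) *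
          Complex.exp (x - 2 * Real.pi * I * (a : ℂ) / (N : ℂ)) /
            (Complex.exp (x - 2 * Real.pi * I * (a : ℂ) / (N : ℂ)) - 1)) =
        ∑ a ∈ Icc 1 N, (starRingEnd ℂ) (χ (a : ZMod N)) /
          (Complex.exp (x - 2 * Real.pi * I * (a : ℂ) / (N : ℂ)) - 1) := by
  have : NeZero N := ⟨hN.ne'⟩
  have hN0 : (N : ℂ) ≠ 0 := Nat.cast_ne_zero.mpr hN.ne'
  have hNr : (0 : ℝ) < N := by exact_mod_cast hN
  have hGeq : (∑ a ∈ Icc 1 N, χ (a : ZMod N) *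
      Complex.exp (2 * Real.pi * I * (a : ℂ) / (N : ℂ)))
      = gaussSum χ ZMod.stdAddChar := by
    rw [gaussSum, ← sum_Icc_zmod (fun y : ZMod N => χ y * ZMod.stdAddChar y)]
    exact Finset.sum_congr rfl fun a _ => by rw [zeta_eq]
  have hg : gaussSum χ ZMod.stdAddChar ≠ 0 := gauss_ne χ hχ
  refine ⟨by rw [hGeq]; exact hg, fun x hx1 hx2 => ?_⟩
  have hNx : Complex.exp ((N : ℂ) * x) ≠ 1 := by
    intro h
    obtain ⟨n, hn⟩ := Complex.exp_eq_one_iff.mp h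
    have habs : (N : ℝ) * ‖x‖ = |(n : ℝ)| * (2 * Real.pi) := by
      have h' := congrArg (‖·‖) hn
      rw [norm_mul, Complex.norm_natCast] at h'
      rw [h']
      simp [abs_of_pos Real.pi_pos]
    rcases eq_or_ne n 0 with rfl | hn0
    · have hx0 : x = 0 := by
        have : (N : ℂ) * x = 0 := by rw [hn]; simp
        rcases mul_eq_zero.mp this with h' | h'
        · exact absurd h' hN0
        · exact h'
      rw [hx0] at hx1; simp at hx1
    · have h1 : (1 : ℝ) ≤ |(n : ℝ)| := by
        have := Int.one_le_abs hn0
        calc (1 : ℝ) ≤ ((|n| : ℤ) : ℝ) := by exact_mod_cast this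
          _ = |(n : ℝ)| := by push_cast; ring
      have h2 : (N : ℝ) * ‖x‖ < 2 * Real.pi := by
        calc (N : ℝ) * ‖x‖ < (N : ℝ) * (2 * Real.pi / (N : ℝ)) :=
              mul_lt_mul_of_pos_left hx2 hNr
          _ = 2 * Real.pi := by field_simp
      nlinarith [Real.pi_pos]
  have hwAll : ∀ a ∈ Icc 1 N,
      Complex.exp (x - 2 * Real.pi * I * (a : ℂ) / (N : ℂ)) ≠ 1 := by
    intro a ha h
    obtain ⟨n, hn⟩ := Complex.exp_eq_one_iff.mp h
    set m : ℤ := n * N + a with hm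
    have hxeq : x = 2 * (Real.pi : ℂ) * I * (m : ℂ) / (N : ℂ) := by
      have h' : 2 * (Real.pi : ℂ) * I * (m : ℂ) / (N : ℂ)
          = (n : ℂ) * (2 * Real.pi * I) + 2 * Real.pi * I * (a : ℂ) / (N : ℂ) := by
        rw [hm]
        push_cast
        field_simp
      rw [h']
      linear_combination hn
    have habs : ‖x‖ = 2 * Real.pi * |(m : ℝ)| / (N : ℝ) := by
      rw [hxeq]
      rw [norm_div, norm_mul, norm_mul, norm_mul, Complex.norm_I, Complex.norm_natCast]
      simp [abs_of_pos Real.pi_pos, Complex.norm_real]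
    rcases eq_or_ne m 0 with hm0 | hm0
    · rw [hm0] at habs
      simp at habs
      rw [habs] at hx1
      simp at hx1
    · have h1 : (1 : ℝ) ≤ |(m : ℝ)| := by
        have := Int.one_le_abs hm0
        calc (1 : ℝ) ≤ ((|m| : ℤ) : ℝ) := by exact_mod_cast this
          _ = |(m : ℝ)| := by push_cast; ring
      have h2 : 2 * Real.pi / (N : ℝ) ≤ ‖x‖ := by
        rw [habs, div_le_div_iff₀ hNr hNr]
        nlinarith [mul_le_mul_of_nonneg_right h1 (by positivity : (0:ℝ) ≤ 2*Real.pi*(N:ℝ))]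
      linarith
  refine ⟨hNx, hwAll, ?_, snd_aux χ hχ1 x hwAll⟩
  rw [hGeq]
  have key := main_aux χ hχ x hNx hwAll
  calc (N : ℂ) * (gaussSum χ ZMod.stdAddChar)⁻¹ *
        ∑ a ∈ Icc 1 N, χ (a : ZMod N) * Complex.exp ((a : ℂ) * x) /
          (Complex.exp ((N : ℂ) * x) - 1)
      = (gaussSum χ ZMod.stdAddChar)⁻¹ *
        ((N : ℂ) * ∑ a ∈ Icc 1 N, χ (a : ZMod N) * Complex.exp ((a : ℂ) * x) /
          (Complex.exp ((N : ℂ) * x) - 1)) := by ring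
    _ = (gaussSum χ ZMod.stdAddChar)⁻¹ * (gaussSum χ ZMod.stdAddChar *
        ∑ a ∈ Icc 1 N, (starRingEnd ℂ) (χ (a : ZMod N)) *
          Complex.exp (x - 2 * Real.pi * I * (a : ℂ) / (N : ℂ)) /
            (Complex.exp (x - 2 * Real.pi * I * (a : ℂ) / (N : ℂ)) - 1)) := by rw [key]
    _ = _ := by
        rw [← mul_assoc, inv_mul_cancel₀ hg, one_mul]
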